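/- The effective shape function 𝒲(x_k - x) = ∑_j W_c(x_k - x̃_j)·W_f(x̃_j - x) satisfies the partition of unity: ∑_{k ∈ ℤ} 𝒲(x_k·h_c - x) = 1 for every x ∈ ℝ, where x̃_j = (j + 1/2)·h_f are the cell-centered fine grid points and h_c = m·h_f. -/

import Mathlib

/-- Partition of unity for the unit hat function on the integer lattice. -/
lemma hat_tsum_unit (t : ℝ) : ∑' k : ℤ, max 0 (1 - |(k : ℝ) - t|) = 1 := by
  set n := ⌊t⌋ with hn
  have h1 : (n : ℝ) ≤ t := Int.floor_le t
  have h2 : t < (n : ℝ) + 1 := Int.lt_floor_add_one t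
  have hsupp : ∀ k : ℤ, k ∉ ({n, n + 1} : Finset ℤ) → max 0 (1 - |(k : ℝ) - t|) = 0 := by
    intro k hk
    simp only [Finset.mem_insert, Finset.mem_singleton] at hk
    push_neg at hk
    have habs : (1 : ℝ) ≤ |(k : ℝ) - t| := by
      rcases lt_or_gt_of_ne hk.1 with hlt | hgt
      · have : k ≤ n - 1 := by omega
        have : (k : ℝ) ≤ (n : ℝ) - 1 := by exact_mod_cast this
        rw [abs_sub_comm, abs_of_nonneg (by linarith)]
        linarith
      · have : n + 2 ≤ k := by omega
        have : (n : ℝ) + 2 ≤ (k : ℝ) := by exact_mod_cast this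
        rw [abs_of_nonneg (by linarith)]
        linarith
    exact max_eq_left (by linarith)
  rw [tsum_eq_sum hsupp]
  have hne : n ≠ n + 1 := by omega
  rw [Finset.sum_pair hne]
  have e1 : |(n : ℝ) - t| = t - n := by rw [abs_sub_comm]; exact abs_of_nonneg (by linarith)
  have e2 : |((n + 1 : ℤ) : ℝ) - t| = (n : ℝ) + 1 - t := by
    push_cast
    exact abs_of_nonneg (by linarith)
  rw [e1, e2, max_eq_right (by linarith), max_eq_right (by linarith)]
  ring

/-- Partition of unity for the hat function of width `h` on the lattice `hℤ`. -/
lemma hat_tsum (h : ℝ) (hh : 0 < h) (y : ℝ) :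
    ∑' k : ℤ, max 0 (1 - |(k : ℝ) * h - y| / h) = 1 := by
  have key : ∀ k : ℤ, |(k : ℝ) * h - y| / h = |(k : ℝ) - y / h| := by
    intro k
    rw [show (k : ℝ) * h - y = ((k : ℝ) - y / h) * h by field_simp, abs_mul, abs_of_pos hh,
      mul_div_cancel_right₀ _ hh.ne']
  simp only [key]
  exact hat_tsum_unit (y / h)

set_option maxHeartbeats 1000000 in
theorem effective_shape_partition_of_unity (hf : ℝ) (hhf : 0 < hf)
    (m : ℕ) (hm : 0 < m) (hc : ℝ) (hhc : hc = (m : ℝ) * hf)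
    (Wf Wc : ℝ → ℝ)
    (hWf : ∀ ζ, Wf ζ = max 0 (1 - |ζ| / hf))
    (hWc : ∀ ζ, Wc ζ = max 0 (1 - |ζ| / hc)) :
    ∀ x : ℝ,
      ∑' k : ℤ, (∑' j : ℤ,
        Wc ((k : ℝ) * hc - ((j : ℝ) + 1 / 2) * hf) *
          Wf (((j : ℝ) + 1 / 2) * hf - x)) = 1 := by
  intro x
  have hhc0 : 0 < hc := by
    rw [hhc]
    positivity
  have hfc : hf ≤ hc := by
    rw [hhc]
    nlinarith [Nat.one_le_cast (α := ℝ) |>.mpr hm]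
  set F : ℤ → ℤ → ℝ := fun k j =>
    Wc ((k : ℝ) * hc - ((j : ℝ) + 1 / 2) * hf) * Wf (((j : ℝ) + 1 / 2) * hf - x) with hF
  -- nonzero terms need both factors nonzero, which confines (k, j) to a finite box
  have hbox : ∀ k j : ℤ, F k j ≠ 0 →
      k ∈ Finset.Icc (⌊x / hc⌋ - 2) (⌊x / hc⌋ + 3) ∧
      j ∈ Finset.Icc (⌊x / hf⌋ - 2) (⌊x / hf⌋ + 3) := by
    intro k j hne
    have hne' : Wc ((k : ℝ) * hc - ((j : ℝ) + 1 / 2) * hf) *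
        Wf (((j : ℝ) + 1 / 2) * hf - x) ≠ 0 := hne
    obtain ⟨hWcne, hWfne⟩ := mul_ne_zero_iff.mp hne'
    have hfb : |((j : ℝ) + 1 / 2) * hf - x| < hf := by
      by_contra hcon
      push_neg at hcon
      apply hWfne
      rw [hWf]
      refine max_eq_left ?_
      have : 1 ≤ |((j : ℝ) + 1 / 2) * hf - x| / hf := (one_le_div hhf).mpr hcon
      linarith
    have hcb : |(k : ℝ) * hc - ((j : ℝ) + 1 / 2) * hf| < hc := by
      by_contra hcon
      push_neg at hcon
      apply hWcne
      rw [hWc]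
      refine max_eq_left ?_
      have : 1 ≤ |(k : ℝ) * hc - ((j : ℝ) + 1 / 2) * hf| / hc := (one_le_div hhc0).mpr hcon
      linarith
    constructor
    · -- |k*hc - x| < 2*hc
      have hkx : |(k : ℝ) * hc - x| < 2 * hc := by
        calc |(k : ℝ) * hc - x|
            ≤ |(k : ℝ) * hc - ((j : ℝ) + 1 / 2) * hf| + |((j : ℝ) + 1 / 2) * hf - x| := by
              have := abs_sub_abs_le_abs_sub ((k : ℝ) * hc - x) 0
              simpa using abs_sub_le ((k : ℝ) * hc) (((j : ℝ) + 1 / 2) * hf) x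
          _ < hc + hf := by linarith
          _ ≤ 2 * hc := by linarith
      rw [abs_lt] at hkx
      have hk1 : (k : ℝ) < x / hc + 2 := by
        have h' : (k : ℝ) * hc < (x / hc + 2) * hc := by
          have he : (x / hc + 2) * hc = x + 2 * hc := by field_simp
          rw [he]; linarith [hkx.2]
        exact lt_of_mul_lt_mul_right h' hhc0.le
      have hk2 : x / hc - 2 < (k : ℝ) := by
        have h' : (x / hc - 2) * hc < (k : ℝ) * hc := by
          have he : (x / hc - 2) * hc = x - 2 * hc := by field_simp
          rw [he]; linarith [hkx.1]
        exact lt_of_mul_lt_mul_right h' hhc0.le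
      have hfl1 : (⌊x / hc⌋ : ℝ) ≤ x / hc := Int.floor_le _
      have hfl2 : x / hc < (⌊x / hc⌋ : ℝ) + 1 := Int.lt_floor_add_one _
      rw [Finset.mem_Icc]
      constructor
      · have : ((⌊x / hc⌋ : ℤ) : ℝ) - 2 < (k : ℝ) + 1 := by linarith
        have : (⌊x / hc⌋ : ℤ) - 2 < k + 1 := by exact_mod_cast this
        omega
      · have : (k : ℝ) < ((⌊x / hc⌋ : ℤ) : ℝ) + 3 := by linarith
        exact_mod_cast le_of_lt (by exact_mod_cast this : (k : ℤ) < ⌊x / hc⌋ + 3)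
    · have hjx : |(j : ℝ) * hf - (x - hf / 2)| < hf := by
        have : ((j : ℝ) + 1 / 2) * hf - x = (j : ℝ) * hf - (x - hf / 2) := by ring
        rwa [this] at hfb
      rw [abs_lt] at hjx
      have hj1 : (j : ℝ) < x / hf + 1 := by
        have h' : (j : ℝ) * hf < (x / hf + 1) * hf := by
          have he : (x / hf + 1) * hf = x + hf := by field_simp
          rw [he]; linarith [hjx.2]
        exact lt_of_mul_lt_mul_right h' hhf.le
      have hj2 : x / hf - 2 < (j : ℝ) := by
        have h' : (x / hf - 2) * hf < (j : ℝ) * hf := by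
          have he : (x / hf - 2) * hf = x - 2 * hf := by field_simp
          rw [he]; linarith [hjx.1]
        exact lt_of_mul_lt_mul_right h' hhf.le
      have hfl1 : (⌊x / hf⌋ : ℝ) ≤ x / hf := Int.floor_le _
      have hfl2 : x / hf < (⌊x / hf⌋ : ℝ) + 1 := Int.lt_floor_add_one _
      rw [Finset.mem_Icc]
      constructor
      · have : ((⌊x / hf⌋ : ℤ) : ℝ) - 2 < (j : ℝ) + 1 := by linarith
        have : (⌊x / hf⌋ : ℤ) - 2 < j + 1 := by exact_mod_cast this
        omega
      · have : (j : ℝ) < ((⌊x / hf⌋ : ℤ) : ℝ) + 3 := by linarith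
        exact_mod_cast le_of_lt (by exact_mod_cast this : (j : ℤ) < ⌊x / hf⌋ + 3)
  have hsum : Summable (Function.uncurry F) := by
    apply summable_of_finite_support
    apply Set.Finite.subset
      (Set.finite_Icc ((⌊x / hc⌋ - 2, ⌊x / hf⌋ - 2) : ℤ × ℤ) (⌊x / hc⌋ + 3, ⌊x / hf⌋ + 3))
    intro p hp
    obtain ⟨hk, hj⟩ := hbox p.1 p.2 hp
    rw [Finset.mem_Icc] at hk hj
    exact Set.mem_Icc.mpr ⟨⟨hk.1, hj.1⟩, ⟨hk.2, hj.2⟩⟩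
  have hsumk : ∀ k : ℤ, Summable (F k) := fun k => hsum.prod_factor k
  have hsumj : ∀ j : ℤ, Summable fun k => F k j := by
    intro j
    have hinj : Function.Injective (fun k : ℤ => ((k, j) : ℤ × ℤ)) := by
      intro a b hab
      simpa using congrArg Prod.fst hab
    have h2 := hsum.comp_injective hinj
    simpa [Function.comp_def, Function.uncurry] using h2
  have hswap : ∑' k : ℤ, ∑' j : ℤ, F k j = ∑' j : ℤ, ∑' k : ℤ, F k j :=
    (Summable.tsum_comm' hsum hsumk hsumj).symm
  show ∑' k : ℤ, ∑' j : ℤ, F k j = 1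
  rw [hswap]
  have hinner : ∀ j : ℤ, ∑' k : ℤ, F k j = Wf (((j : ℝ) + 1 / 2) * hf - x) := by
    intro j
    rw [show (fun k : ℤ => F k j) =
        fun k : ℤ => Wc ((k : ℝ) * hc - ((j : ℝ) + 1 / 2) * hf) *
          Wf (((j : ℝ) + 1 / 2) * hf - x) from rfl]
    rw [tsum_mul_right]
    have : ∑' k : ℤ, Wc ((k : ℝ) * hc - ((j : ℝ) + 1 / 2) * hf) = 1 := by
      simp only [hWc]
      exact hat_tsum hc hhc0 (((j : ℝ) + 1 / 2) * hf)
    rw [this, one_mul]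
  rw [tsum_congr hinner]
  have : ∀ j : ℤ, Wf (((j : ℝ) + 1 / 2) * hf - x) =
      max 0 (1 - |(j : ℝ) * hf - (x - hf / 2)| / hf) := by
    intro j
    rw [hWf]
    congr 2
    ring_nf
  rw [tsum_congr this]
  exact hat_tsum hf hhf (x - hf / 2)
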